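/- Let v be a word and suppose v_{[1,j]} x φ is the lexicographically smallest rotation of some word (e.g., the representative of a bracelet enclosing v), where x is a symbol. Let l be the length of the longest Lyndon word that is a prefix of v_{[1,j]}. Then x ≥ v_{((j mod l) + 1)}. -/

import Mathlib

/-- A Lyndon word: nonempty and strictly smaller than all of its proper rotations. -/
def IsLyndon {α : Type*} [LinearOrder α] (w : List α) : Prop :=
  w ≠ [] ∧ ∀ r : ℕ, 0 < r → r < w.length → w < w.rotate r

namespace LyndonAux

variable {α : Type*} [LinearOrder α]

theorem lex_of_take :
    ∀ (m : ℕ) (A B : List α) (hA : m < A.length) (hB : m < B.length),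
      A.take m = B.take m → A[m] < B[m] → List.Lex (· < ·) A B := by
  intro m
  induction m with
  | zero =>
    intro A B hA hB _ hlt
    match A, B with
    | a :: A', b :: B' => exact List.Lex.rel hlt
  | succ m ih =>
    intro A B hA hB htake hlt
    match A, B with
    | a :: A', b :: B' =>
      simp only [List.take_succ_cons, List.cons.injEq] at htake
      obtain ⟨rfl, h2⟩ := htake
      exact List.Lex.cons (ih A' B' (by simpa using hA) (by simpa using hB) h2
        (by simpa using hlt))

theorem exists_diff {A B : List α} (h : List.Lex (· < ·) A B) :
    A.length = B.length →
    ∃ d, ∃ (hA : d < A.length) (hB : d < B.length), A.take d = B.take d ∧ A[d] < B[d] := by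
  induction h with
  | nil => intro hlen; simp at hlen
  | @rel a l₁ b l₂ hab => intro _; exact ⟨0, by simp, by simp, rfl, hab⟩
  | @cons a l₁ l₂ h ih =>
    intro hlen
    obtain ⟨d, h1, h2, h3, h4⟩ := ih (by simpa using hlen)
    exact ⟨d + 1, by simpa using h1, by simpa using h2, by simp [h3], by simpa using h4⟩

theorem lex_append_cancel :
    ∀ (p A B : List α), List.Lex (· < ·) (p ++ A) (p ++ B) → List.Lex (· < ·) A B := by
  intro p
  induction p with
  | nil => intro A B h; simpa using h
  | cons a p ih =>
    intro A B h
    cases h with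
    | cons h => exact ih A B h
    | rel h => exact absurd h (lt_irrefl a)

/-- For a Lyndon word `u` and `0 < k < |u|`, the suffix starting at `k` is strictly
larger than the prefix of the same length, with the first difference inside it. -/
theorem lyndon_diff {u : List α} (hu : IsLyndon u) {k : ℕ} (hk0 : 0 < k)
    (hkl : k < u.length) :
    ∃ m, ∃ (hm : k + m < u.length),
      (∀ i, ∀ (hi : i < m), u[i]'(by omega) = u[k + i]'(by omega)) ∧
      u[m]'(by omega) < u[k + m]'hm := by
  have hrot : List.Lex (· < ·) u (u.rotate k) := hu.2 k hk0 hkl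
  have hre : u.rotate k = u.drop k ++ u.take k := List.rotate_eq_drop_append_take hkl.le
  have hlen : u.length = (u.rotate k).length := (List.length_rotate u k).symm
  have hdl : (u.drop k).length = u.length - k := List.length_drop
  have rotGet : ∀ i, ∀ (h : i < u.length - k),
      (u.rotate k)[i]'(by omega) = u[k + i]'(by omega) := by
    intro i h
    rw [List.getElem_of_eq hre, List.getElem_append_left (by omega), List.getElem_drop]
  obtain ⟨d, hd1, hd2, hd3, hd4⟩ := exists_diff hrot hlen
  by_cases hc : d < u.length - k
  · refine ⟨d, by omega, ?_, ?_⟩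
    · intro i hi
      have e1 : u[i]'(by omega) = (u.rotate k)[i]'(by omega) := by
        have h5 := List.getElem_of_eq hd3 (i := i) (by simp; omega)
        rwa [List.getElem_take, List.getElem_take] at h5
      rw [e1, rotGet i (by omega)]
    · rw [← rotGet d hc]; exact hd4
  · exfalso
    have hb1 : u.take (u.length - k) = (u.rotate k).take (u.length - k) := by
      have h := congrArg (List.take (u.length - k)) hd3
      rwa [List.take_take, List.take_take,
        min_eq_left (show u.length - k ≤ d by omega)] at h
    have hborder : u.take (u.length - k) = u.drop k := by
      rw [hb1, hre, List.take_append_of_le_length (by omega), ← hdl, List.take_length]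
    have hlm' : (u.drop (u.length - k)).length = k := by rw [List.length_drop]; omega
    have h2 : List.Lex (· < ·) (u.drop k ++ (u.drop (u.length - k)))
        (u.drop k ++ u.take k) := by
      have he : u.drop k ++ u.drop (u.length - k) = u := by
        rw [← hborder, List.take_append_drop]
      rw [he, ← hre]; exact hrot
    have h3 : List.Lex (· < ·) (u.drop (u.length - k)) (u.take k) :=
      lex_append_cancel _ _ _ h2
    have hlen2 : (u.drop (u.length - k)).length = (u.take k).length := by
      simp [hlm', min_eq_left hkl.le]
    obtain ⟨d', hd'1, hd'2, hd'3, hd'4⟩ := exists_diff h3 hlen2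
    have hrl : u.rotate (u.length - k) = u.drop (u.length - k) ++ u.take (u.length - k) :=
      List.rotate_eq_drop_append_take (by omega)
    have hult : List.Lex (· < ·) u (u.rotate (u.length - k)) :=
      hu.2 _ (by omega) (by omega)
    have hu_eq : u = u.take k ++ u.take (u.length - k) := by
      conv_lhs => rw [← List.take_append_drop k u, ← hborder]
    have hgt : List.Lex (· < ·) (u.rotate (u.length - k)) u := by
      rw [hrl]
      conv_rhs => rw [hu_eq]
      apply lex_of_take d' (hA := by simp at hd'1 ⊢; omega) (hB := by simp at hd'2 ⊢; omega)
      · rw [List.take_append_of_le_length (by omega),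
          List.take_append_of_le_length (by simp at hd'2 ⊢; omega), hd'3]
      · rw [List.getElem_append_left hd'1, List.getElem_append_left hd'2]
        exact hd'4
    exact absurd (lt_trans (show u < u.rotate (u.length - k) from hult)
      (show u.rotate (u.length - k) < u from hgt)) (lt_irrefl u)

omit [LinearOrder α] in
theorem gec {L : List α} {a b : ℕ} (h : a = b) {ha : a < L.length} :
    L[a]'ha = L[b]'(h ▸ ha) := by cases h; rfl

/-- Extending a power of a Lyndon word `u` (truncated) by a symbol strictly larger than
the corresponding symbol of `u` produces a Lyndon word. -/
theorem lyndon_extend {u p : List α} (hu : IsLyndon u) (hl0 : 0 < u.length)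
    (hlp : u.length < p.length)
    (hper : ∀ i, ∀ (hi : i + 1 < p.length),
      p[i]'(by omega) = u[i % u.length]'(Nat.mod_lt _ hl0))
    (hlast : u[(p.length - 1) % u.length]'(Nat.mod_lt _ hl0) < p[p.length - 1]'(by omega)) :
    IsLyndon p := by
  constructor
  · intro h; rw [h] at hlp; simp at hlp
  · intro s hs0 hsN
    show List.Lex (· < ·) p (p.rotate s)
    have hre : p.rotate s = p.drop s ++ p.take s := List.rotate_eq_drop_append_take hsN.le
    have rotGet : ∀ i, ∀ (h : i < p.length - s),
        (p.rotate s)[i]'(by rw [List.length_rotate]; omega) = p[s + i]'(by omega) := by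
      intro i h
      rw [List.getElem_of_eq hre, List.getElem_append_left (by simpa using h),
        List.getElem_drop]
    have hmod : ∀ i, (s + i) % u.length = (s % u.length + i) % u.length := by
      intro i
      conv_lhs => rw [show s + i = u.length * (s / u.length) + (s % u.length + i) by
        have := Nat.div_add_mod s u.length; omega]
      rw [Nat.mul_add_mod]
    by_cases hc : s % u.length = 0
    · -- s is a multiple of the period
      refine lex_of_take (p.length - s - 1) p (p.rotate s) (by omega)
        (by rw [List.length_rotate]; omega) ?_ ?_
      · apply List.ext_getElem (by simp [List.length_rotate])
        intro i h1 h2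
        rw [List.getElem_take, List.getElem_take, rotGet i (by simp at h1; omega),
          hper i (by simp at h1; omega), hper (s + i) (by simp at h1; omega)]
        rw [gec (show i % u.length = (s + i) % u.length by
          rw [hmod, hc, Nat.zero_add])]
      · rw [rotGet _ (by omega),
          gec (show s + (p.length - s - 1) = p.length - 1 by omega),
          hper (p.length - s - 1) (by omega),
          gec (show (p.length - s - 1) % u.length = (p.length - 1) % u.length by
            rw [show p.length - 1 = s + (p.length - s - 1) by omega, hmod, hc, Nat.zero_add])]
        exact hlast
    · -- s is not a multiple of the period
      have hc' : 0 < s % u.length := Nat.pos_of_ne_zero hc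
      have hcl : s % u.length < u.length := Nat.mod_lt _ hl0
      obtain ⟨m0, hm0, hagree, hm0lt⟩ := lyndon_diff hu hc' hcl
      have agree : ∀ i, ∀ (h1 : i < p.length - 1 - s), ∀ (h2 : i < m0),
          p[i]'(by omega) = (p.rotate s)[i]'(by rw [List.length_rotate]; omega) := by
        intro i h1 h2
        rw [rotGet i (by omega), hper i (by omega), hper (s + i) (by omega),
          gec (show i % u.length = i from Nat.mod_eq_of_lt (by omega)),
          gec (show (s + i) % u.length = s % u.length + i by
            rw [hmod]; exact Nat.mod_eq_of_lt (by omega))]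
        exact hagree i h2
      by_cases hcase : p.length - 1 - s ≤ m0
      · refine lex_of_take (p.length - 1 - s) p (p.rotate s) (by omega)
          (by rw [List.length_rotate]; omega) ?_ ?_
        · apply List.ext_getElem (by simp [List.length_rotate])
          intro i h1 h2
          rw [List.getElem_take, List.getElem_take]
          exact agree i (by simp at h1; omega) (by simp at h1; omega)
        · rw [rotGet _ (by omega),
            gec (show s + (p.length - 1 - s) = p.length - 1 by omega),
            hper (p.length - 1 - s) (by omega),
            gec (show (p.length - 1 - s) % u.length = p.length - 1 - s from
              Nat.mod_eq_of_lt (by omega))]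
          have hmodN : (p.length - 1) % u.length = s % u.length + (p.length - 1 - s) := by
            conv_lhs => rw [show p.length - 1 = s + (p.length - 1 - s) by omega]
            rw [hmod]
            exact Nat.mod_eq_of_lt
              (show s % u.length + (p.length - 1 - s) < u.length by omega)
          have h9 := hlast
          rw [gec hmodN] at h9
          refine lt_of_le_of_lt ?_ h9
          rcases lt_or_eq_of_le hcase with h | h
          · exact le_of_eq (hagree _ h)
          · subst h
            exact le_of_lt hm0lt
      · refine lex_of_take m0 p (p.rotate s) (by omega)
          (by rw [List.length_rotate]; omega) ?_ ?_
        · apply List.ext_getElem (by simp [List.length_rotate])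
          intro i h1 h2
          rw [List.getElem_take, List.getElem_take]
          exact agree i (by simp at h1; omega) (by simp at h1; omega)
        · rw [rotGet m0 (by omega), hper m0 (by omega), hper (s + m0) (by omega),
            gec (show m0 % u.length = m0 from Nat.mod_eq_of_lt (by omega)),
            gec (show (s + m0) % u.length = s % u.length + m0 by
              rw [hmod]; exact Nat.mod_eq_of_lt (by omega))]
          exact hm0lt

end LyndonAux

/-- If `v.take j ++ x :: φ` is the lexicographically least rotation of itself and `l` is
the length of the longest Lyndon prefix of `v.take j`, then `x ≥ v_{(j mod l) + 1}`. -/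
theorem enclosing_symbol_lower_bound {α : Type*} [Fintype α] [LinearOrder α]
    (v : List α) (j l : ℕ) (hj0 : 0 < j) (hjv : j ≤ v.length)
    (hl0 : 0 < l) (hlj : l ≤ j)
    (hLyndon : IsLyndon (v.take l))
    (hlongest : ∀ m : ℕ, 0 < m → m ≤ j → IsLyndon (v.take m) → m ≤ l)
    (x : α) (φ : List α)
    (hmin : ∀ r : ℕ, (v.take j ++ x :: φ) ≤ (v.take j ++ x :: φ).rotate r) :
    v.get ⟨j % l, lt_of_lt_of_le (Nat.mod_lt j hl0) (le_trans hlj hjv)⟩ ≤ x := by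
  classical
  set w : List α := v.take j ++ x :: φ with hw
  have htj : (v.take j).length = j := by simp [min_eq_left hjv]
  have hwlen : w.length = j + 1 + φ.length := by
    rw [hw, List.length_append, htj, List.length_cons]; omega
  have hjw : j < w.length := by omega
  have wget : ∀ m, ∀ (hm : m < j), w[m]'(by omega) = v[m]'(by omega) := by
    intro m hm
    rw [List.getElem_of_eq hw, List.getElem_append_left (by rw [htj]; exact hm), List.getElem_take]
  have wgetj : w[j]'hjw = x := by
    rw [List.getElem_of_eq hw, List.getElem_append_right (le_of_eq htj),
      LyndonAux.gec (show j - (v.take j).length = 0 by rw [htj]; omega)]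
    rfl
  have hvml : ∀ m : ℕ, m % l < v.length := fun m =>
    (Nat.mod_lt m hl0).trans_le (hlj.trans hjv)
  have hul : (v.take l).length = l := by simp [min_eq_left (hlj.trans hjv)]
  -- key : any position k ≥ l up to which `w` is `l`-periodic cannot carry a symbol
  -- smaller than the corresponding symbol of the period, else a smaller rotation exists
  have key : ∀ k, ∀ (hlk : l ≤ k), ∀ (hkj : k ≤ j),
      ∀ (hperk : ∀ m, ∀ (hm : m < k), w[m]'(by omega) = v[m % l]'(hvml m)),
      ¬ (w[k]'(by omega) < v[k % l]'(hvml k)) := by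
    intro k hlk hkj hperk hlt
    set r := k - k % l with hr
    have hkml : k % l < l := Nat.mod_lt k hl0
    have hdm := Nat.div_add_mod k l
    have hr0 : 0 < r := by omega
    have hrw : r ≤ w.length := by omega
    have hre : w.rotate r = w.drop r ++ w.take r := List.rotate_eq_drop_append_take hrw
    have rotGet : ∀ i, ∀ (h : i < w.length - r),
        (w.rotate r)[i]'(by rw [List.length_rotate]; omega) = w[r + i]'(by omega) := by
      intro i h
      rw [List.getElem_of_eq hre, List.getElem_append_left (by simpa using h),
        List.getElem_drop]
    have hmodr : ∀ i : ℕ, (r + i) % l = i % l := by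
      intro i
      conv_lhs => rw [show r + i = l * (k / l) + i by omega]
      rw [Nat.mul_add_mod]
    have hlex : List.Lex (· < ·) (w.rotate r) w := by
      apply LyndonAux.lex_of_take (k % l) _ _ (by rw [List.length_rotate]; omega) (by omega)
      · apply List.ext_getElem (by simp [List.length_rotate])
        intro i h1 h2
        have hikl : i < k % l := by simp at h1; omega
        rw [List.getElem_take, List.getElem_take, rotGet i (by omega),
          hperk (r + i) (by omega), hperk i (by omega),
          LyndonAux.gec (show (r + i) % l = i % l from hmodr i)]
      · rw [rotGet (k % l) (by omega),
          LyndonAux.gec (show r + k % l = k by omega),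
          hperk (k % l) (by omega),
          LyndonAux.gec (show (k % l) % l = k % l from Nat.mod_eq_of_lt hkml)]
        exact hlt
    exact absurd (hmin r) (not_le.mpr (show w.rotate r < w from hlex))
  -- periodicity of the prefix
  have per : ∀ i, ∀ (hij : i < j), v[i]'(by omega) = v[i % l]'(hvml i) := by
    intro i
    induction i using Nat.strong_induction_on with
    | _ i ih =>
      intro hij
      by_cases hil : i < l
      · rw [LyndonAux.gec (show i = i % l from (Nat.mod_eq_of_lt hil).symm)]
      · push_neg at hil
        rcases lt_trichotomy (v[i]'(by omega)) (v[i % l]'(hvml i)) with hc | hc | hc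
        · exfalso
          refine key i hil hij.le ?_ ?_
          · intro m hm
            rw [wget m (by omega)]
            exact ih m hm (by omega)
          · rw [wget i (by omega)]
            exact hc
        · exact hc
        · exfalso
          have hlen1 : (v.take (i + 1)).length = i + 1 := by
            simp [min_eq_left (show i + 1 ≤ v.length by omega)]
          have hly : IsLyndon (v.take (i + 1)) := by
            refine LyndonAux.lyndon_extend hLyndon (by rw [hul]; omega)
              (by rw [hul, hlen1]; omega) ?_ ?_
            · intro m hm
              rw [List.getElem_take, List.getElem_take,
                LyndonAux.gec (show m % (v.take l).length = m % l by rw [hul])]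
              exact ih m (by rw [hlen1] at hm; omega) (by rw [hlen1] at hm; omega)
            · rw [List.getElem_take, List.getElem_take,
                LyndonAux.gec (show ((v.take (i + 1)).length - 1) % (v.take l).length = i % l
                  by simp [hul, hlen1]),
                LyndonAux.gec (show (v.take (i + 1)).length - 1 = i by simp [hlen1])]
              exact hc
          have := hlongest (i + 1) (by omega) (by omega) hly
          omega
  by_contra hcon
  push_neg at hcon
  rw [List.get_eq_getElem] at hcon
  have hcon' : w[j]'hjw < v[j % l]'(hvml j) := by
    rw [wgetj]
    exact hcon
  refine key j hlj le_rfl ?_ hcon'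
  intro m hm
  rw [wget m hm]
  exact per m hm
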